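/- Let n ≥ 1 and let S ⊆ {1,…,n−1} be any (possibly empty) set of positive integers less than n. Let G be a finite simple graph, G' a finite simple graph with V(G) ⊆ V(G'), and Blue_0, Red_0 disjoint subsets of V(G') \ V(G) such that: (a) every vertex of V(G') \ (V(G) ∪ Blue_0 ∪ Red_0) is at graph distance at most n in G' from some vertex of Blue_0 and at distance at most n from some vertex of Red_0; (b) every vertex of V(G) is at distance at least n+1 from every vertex of Blue_0 ∪ Red_0; (c) for distinct u, v ∈ V(G), dist_{G'}(u,v) = n if uv is an edge of G, and dist_{G'}(u,v) ≥ n+1 otherwise; (d) any two distinct vertices of Blue_0 ∪ Red_0 are at distance at least n+1. Then the distance game D⟨{1,…,n},S⟩ on G' starting from the position with blue pieces on Blue_0 and red pieces on Red_0 is play-for-play equivalent to Snort on G starting from the empty position; in particular the player moving first (respectively, second) has a winning strategy in one game if and only if in the other. -/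

import Mathlib

namespace SetTheory

universe w

inductive PGame : Type (w + 1)
  | mk : ∀ α β : Type w, (α → PGame) → (β → PGame) → PGame

namespace PGame

def LeftMoves : PGame.{w} → Type w
  | mk l _ _ _ => l

def RightMoves : PGame.{w} → Type w
  | mk _ r _ _ => r

def moveLeft : ∀ g : PGame.{w}, LeftMoves g → PGame.{w}
  | mk _ _ L _ => L

def moveRight : ∀ g : PGame.{w}, RightMoves g → PGame.{w}
  | mk _ _ _ R => R

instance : Zero PGame := ⟨⟨PEmpty, PEmpty, PEmpty.elim, PEmpty.elim⟩⟩

noncomputable def leLF (x : PGame.{w}) : PGame.{w} → Prop × Prop :=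
  PGame.rec (motive := fun _ => PGame.{w} → Prop × Prop)
    (fun _ _ xL xR ihL ihR y =>
      PGame.rec (motive := fun _ => Prop × Prop)
        (fun yl yr yL yR jhL jhR =>
          ((∀ i, (ihL i (mk yl yr yL yR)).2) ∧ ∀ j, (jhR j).2,
            (∃ i, (jhL i).1) ∨ ∃ j, (ihR j (mk yl yr yL yR)).1)) y) x

noncomputable instance : LE PGame := ⟨fun x y => (leLF x y).1⟩

def LF (x y : PGame) : Prop :=
  ¬y ≤ x

infixl:50 " ⧏ " => SetTheory.PGame.LF

inductive Relabelling : PGame.{w} → PGame.{w} → Type (w + 1)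
  | mk : ∀ {x y : PGame} (L : x.LeftMoves ≃ y.LeftMoves) (R : x.RightMoves ≃ y.RightMoves),
      (∀ i, Relabelling (x.moveLeft i) (y.moveLeft (L i))) →
        (∀ j, Relabelling (x.moveRight j) (y.moveRight (R j))) → Relabelling x y

infixl:50 " ≡r " => SetTheory.PGame.Relabelling

end PGame

end SetTheory

open SimpleGraph SetTheory

/-- In the distance game `D⟨D,S⟩` on the graph `G`, from the position with blue pieces on
`blue` and red pieces on `red`, Left may legally place a blue piece on the vertex `v`. -/
def LeftMove {W : Type*} (G : SimpleGraph W) (D S : Set ℕ) (blue red : Finset W) (v : W) : Prop :=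
  v ∉ blue ∧ v ∉ red ∧ (∀ r ∈ red, ∀ d ∈ D, G.edist v r ≠ (d : ℕ∞)) ∧
    ∀ b ∈ blue, ∀ s ∈ S, G.edist v b ≠ (s : ℕ∞)

/-- Right may legally place a red piece on the vertex `v`. -/
def RightMove {W : Type*} (G : SimpleGraph W) (D S : Set ℕ) (blue red : Finset W) (v : W) : Prop :=
  v ∉ blue ∧ v ∉ red ∧ (∀ b ∈ blue, ∀ d ∈ D, G.edist v b ≠ (d : ℕ∞)) ∧
    ∀ r ∈ red, ∀ s ∈ S, G.edist v r ≠ (s : ℕ∞)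

/-- The distance game `D⟨D,S⟩` on `G` from the position `(blue, red)`, as a combinatorial
game (normal play: a player with no legal move loses). -/
def distGame {W : Type*} [Fintype W] [DecidableEq W] (G : SimpleGraph W) (D S : Set ℕ)
    (blue red : Finset W) : PGame :=
  PGame.mk {v // LeftMove G D S blue red v} {v // RightMove G D S blue red v}
    (fun x => distGame G D S (insert x.1 blue) red)
    (fun x => distGame G D S blue (insert x.1 red))
termination_by ((blue ∪ red)ᶜ).card
decreasing_by
  · obtain ⟨h1, h2, -, -⟩ := x.2
    calc ((insert x.1 blue ∪ red)ᶜ).card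
        = (((blue ∪ red)ᶜ).erase x.1).card := by
          rw [Finset.insert_union, Finset.compl_insert]
      _ < ((blue ∪ red)ᶜ).card :=
          Finset.card_erase_lt_of_mem (Finset.mem_compl.2 (by simp [h1, h2]))
  · obtain ⟨h1, h2, -, -⟩ := x.2
    calc ((blue ∪ insert x.1 red)ᶜ).card
        = (((blue ∪ red)ᶜ).erase x.1).card := by
          rw [Finset.union_insert, Finset.compl_insert]
      _ < ((blue ∪ red)ᶜ).card :=
          Finset.card_erase_lt_of_mem (Finset.mem_compl.2 (by simp [h1, h2]))

/-- `BiGraph-Node-Kayles` on a bipartite graph `G` with parts `VL`, `VR`, from the position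
where `occ` is the set of occupied vertices: players alternately occupy vertices that are
neither equal nor adjacent to a previously occupied vertex, Left occupying only vertices of
`VL` and Right only vertices of `VR`; a player with no legal move loses. -/
def bnkGame {V : Type*} [Fintype V] [DecidableEq V] (G : SimpleGraph V) (VL VR : Finset V)
    (occ : Finset V) : PGame :=
  PGame.mk {v // v ∈ VL ∧ v ∉ occ ∧ ∀ u ∈ occ, ¬G.Adj v u}
    {v // v ∈ VR ∧ v ∉ occ ∧ ∀ u ∈ occ, ¬G.Adj v u}
    (fun x => bnkGame G VL VR (insert x.1 occ))
    (fun x => bnkGame G VL VR (insert x.1 occ))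
termination_by occᶜ.card
decreasing_by
  all_goals
  · obtain ⟨-, h1, -⟩ := x.2
    calc ((insert x.1 occ)ᶜ).card = (occᶜ.erase x.1).card := by rw [Finset.compl_insert]
      _ < occᶜ.card := Finset.card_erase_lt_of_mem (Finset.mem_compl.2 h1)

universe u

open Finset in
private lemma enat_ne_of_ge {n d : ℕ} {e : ℕ∞} (hd : d ≤ n) (he : (n : ℕ∞) + 1 ≤ e) :
    e ≠ (d : ℕ∞) := by
  intro h
  have h1 : (d : ℕ∞) < (n : ℕ∞) + 1 := by
    rw [show (n : ℕ∞) + 1 = ((n + 1 : ℕ) : ℕ∞) by push_cast; ring]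
    exact_mod_cast Nat.lt_succ_of_le hd
  exact absurd (h ▸ he) (not_le.mpr h1)

/-- The equivalence between the moves of the big game and the moves of Snort. -/
private noncomputable def movesEquiv {V W : Type u} (ι : V ↪ W) (P : W → Prop) (Q : V → Prop)
    (h : ∀ w, P w ↔ ∃ v, ι v = w ∧ Q v) : {w // P w} ≃ {v // Q v} where
  toFun x := ⟨((h x.1).mp x.2).choose, ((h x.1).mp x.2).choose_spec.2⟩
  invFun y := ⟨ι y.1, (h _).mpr ⟨y.1, rfl, y.2⟩⟩
  left_inv x := Subtype.ext ((h x.1).mp x.2).choose_spec.1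
  right_inv y := Subtype.ext (ι.injective ((h _).mp ((h _).mpr ⟨y.1, rfl, y.2⟩)).choose_spec.1)

private lemma movesEquiv_spec {V W : Type u} (ι : V ↪ W) (P : W → Prop) (Q : V → Prop)
    (h : ∀ w, P w ↔ ∃ v, ι v = w ∧ Q v) (x : {w // P w}) :
    ι (movesEquiv ι P Q h x).1 = x.1 :=
  ((h x.1).mp x.2).choose_spec.1

private lemma rightMove_eq_leftMove {W : Type*} (G : SimpleGraph W) (D S : Set ℕ)
    (blue red : Finset W) (v : W) :
    RightMove G D S blue red v ↔ LeftMove G D S red blue v := by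
  unfold RightMove LeftMove; tauto

/-- The key iff: legal Left moves in the big game correspond exactly to legal Left
moves in Snort. -/
private lemma left_iff {V W : Type u} [Fintype V] [DecidableEq V] [Fintype W] [DecidableEq W]
    (n : ℕ) (hn : 1 ≤ n) (S : Set ℕ) (hS : ∀ s ∈ S, 1 ≤ s ∧ s < n)
    (G : SimpleGraph V) (G' : SimpleGraph W) (ι : V ↪ W)
    (Blue0 Red0 : Finset W)
    (hB0 : ∀ v : V, ι v ∉ Blue0) (hR0 : ∀ v : V, ι v ∉ Red0)
    (haR : ∀ w : W, (∀ v : V, ι v ≠ w) → w ∉ Blue0 → w ∉ Red0 →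
      ∃ r ∈ Red0, G'.edist w r ≤ (n : ℕ∞))
    (hbB : ∀ v : V, ∀ w ∈ Blue0, (n : ℕ∞) + 1 ≤ G'.edist (ι v) w)
    (hbR : ∀ v : V, ∀ w ∈ Red0, (n : ℕ∞) + 1 ≤ G'.edist (ι v) w)
    (hc : ∀ u v : V, u ≠ v →
      (G.Adj u v → G'.edist (ι u) (ι v) = (n : ℕ∞)) ∧
      (¬G.Adj u v → (n : ℕ∞) + 1 ≤ G'.edist (ι u) (ι v)))
    (B R : Finset V) (w : W) :
    LeftMove G' (Set.Icc 1 n) S (Blue0 ∪ B.image ι) (Red0 ∪ R.image ι) w ↔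
      ∃ v, ι v = w ∧ LeftMove G {1} (∅ : Set ℕ) B R v := by
  constructor
  · rintro ⟨hw1, hw2, hw3, hw4⟩
    by_cases himg : ∃ v, ι v = w
    · obtain ⟨v, rfl⟩ := himg
      refine ⟨v, rfl, ?_, ?_, ?_, ?_⟩
      · intro hvB
        exact hw1 (Finset.mem_union_right _ (Finset.mem_image_of_mem ι hvB))
      · intro hvR
        exact hw2 (Finset.mem_union_right _ (Finset.mem_image_of_mem ι hvR))
      · intro r hr d hd heq
        rw [Set.mem_singleton_iff] at hd
        subst hd
        have hadj : G.Adj v r := by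
          rw [← SimpleGraph.edist_eq_one_iff_adj]
          exact_mod_cast heq
        have hdist := (hc v r hadj.ne).1 hadj
        exact hw3 (ι r) (Finset.mem_union_right _ (Finset.mem_image_of_mem ι hr)) n
          (Set.mem_Icc.mpr ⟨hn, le_rfl⟩) hdist
      · intro b _ s hs
        exact absurd hs (Set.notMem_empty s)
    · exfalso
      push_neg at himg
      have hwB : w ∉ Blue0 := fun h => hw1 (Finset.mem_union_left _ h)
      have hwR : w ∉ Red0 := fun h => hw2 (Finset.mem_union_left _ h)
      obtain ⟨r, hrR0, hle⟩ := haR w himg hwB hwR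
      have hne : w ≠ r := fun h => hwR (h ▸ hrR0)
      have hpos : 0 < G'.edist w r := SimpleGraph.edist_pos_of_ne hne
      have htop : G'.edist w r ≠ ⊤ :=
        (lt_of_le_of_lt hle (by simp : (n : ℕ∞) < ⊤)).ne
      lift G'.edist w r to ℕ using htop with d hdeq
      refine hw3 r (Finset.mem_union_left _ hrR0) d (Set.mem_Icc.mpr ⟨?_, ?_⟩) hdeq.symm
      · exact_mod_cast hpos
      · exact_mod_cast hle
  · rintro ⟨v, rfl, hv1, hv2, hv3, -⟩
    refine ⟨?_, ?_, ?_, ?_⟩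
    · intro h
      rcases Finset.mem_union.mp h with h | h
      · exact hB0 v h
      · obtain ⟨u, huB, hu⟩ := Finset.mem_image.mp h
        exact hv1 (ι.injective hu ▸ huB)
    · intro h
      rcases Finset.mem_union.mp h with h | h
      · exact hR0 v h
      · obtain ⟨u, huR, hu⟩ := Finset.mem_image.mp h
        exact hv2 (ι.injective hu ▸ huR)
    · intro r hr d hd
      rw [Set.mem_Icc] at hd
      rcases Finset.mem_union.mp hr with h | h
      · exact enat_ne_of_ge hd.2 (hbR v r h)
      · obtain ⟨r', hr'R, rfl⟩ := Finset.mem_image.mp h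
        have hne : v ≠ r' := fun h => hv2 (h ▸ hr'R)
        have hnadj : ¬G.Adj v r' := by
          intro hadj
          exact hv3 r' hr'R 1 rfl
            (by exact_mod_cast SimpleGraph.edist_eq_one_iff_adj.mpr hadj)
        exact enat_ne_of_ge hd.2 ((hc v r' hne).2 hnadj)
    · intro b hb s hs
      obtain ⟨hs1, hs2⟩ := hS s hs
      rcases Finset.mem_union.mp hb with h | h
      · exact enat_ne_of_ge (le_of_lt hs2) (hbB v b h)
      · obtain ⟨b', hb'B, rfl⟩ := Finset.mem_image.mp h
        have hne : v ≠ b' := fun h => hv1 (h ▸ hb'B)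
        by_cases hadj : G.Adj v b'
        · rw [(hc v b' hne).1 hadj]
          intro h
          have : n = s := by exact_mod_cast h
          omega
        · exact enat_ne_of_ge (le_of_lt hs2) ((hc v b' hne).2 hadj)

open SetTheory.PGame in
private theorem key {V W : Type u} [Fintype V] [DecidableEq V] [Fintype W] [DecidableEq W]
    (n : ℕ) (hn : 1 ≤ n) (S : Set ℕ) (hS : ∀ s ∈ S, 1 ≤ s ∧ s < n)
    (G : SimpleGraph V) (G' : SimpleGraph W) (ι : V ↪ W)
    (Blue0 Red0 : Finset W)
    (hB0 : ∀ v : V, ι v ∉ Blue0) (hR0 : ∀ v : V, ι v ∉ Red0)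
    (ha : ∀ w : W, (∀ v : V, ι v ≠ w) → w ∉ Blue0 → w ∉ Red0 →
      (∃ b ∈ Blue0, G'.edist w b ≤ (n : ℕ∞)) ∧ (∃ r ∈ Red0, G'.edist w r ≤ (n : ℕ∞)))
    (hb : ∀ v : V, ∀ w ∈ Blue0 ∪ Red0, (n : ℕ∞) + 1 ≤ G'.edist (ι v) w)
    (hc : ∀ u v : V, u ≠ v →
      (G.Adj u v → G'.edist (ι u) (ι v) = (n : ℕ∞)) ∧
      (¬G.Adj u v → (n : ℕ∞) + 1 ≤ G'.edist (ι u) (ι v))) :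
    ∀ (k : ℕ) (B R : Finset V), ((B ∪ R)ᶜ).card = k →
      Nonempty (distGame G' (Set.Icc 1 n) S (Blue0 ∪ B.image ι) (Red0 ∪ R.image ι) ≡r
        distGame G {1} (∅ : Set ℕ) B R) := by
  have hbB : ∀ v : V, ∀ w ∈ Blue0, (n : ℕ∞) + 1 ≤ G'.edist (ι v) w :=
    fun v w hw => hb v w (Finset.mem_union_left _ hw)
  have hbR : ∀ v : V, ∀ w ∈ Red0, (n : ℕ∞) + 1 ≤ G'.edist (ι v) w :=
    fun v w hw => hb v w (Finset.mem_union_right _ hw)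
  have hc' : ∀ u v : V, u ≠ v →
      ((SimpleGraph.Adj G) u v → G'.edist (ι u) (ι v) = (n : ℕ∞)) ∧
      (¬(SimpleGraph.Adj G) u v → (n : ℕ∞) + 1 ≤ G'.edist (ι u) (ι v)) := hc
  intro k
  induction k using Nat.strong_induction_on with
  | _ k ih =>
    intro B R hk
    have hLiff := left_iff n hn S hS G G' ι Blue0 Red0 hB0 hR0
      (fun w h1 h2 h3 => (ha w h1 h2 h3).2) hbB hbR hc B R
    have hRiff : ∀ w : W,
        RightMove G' (Set.Icc 1 n) S (Blue0 ∪ B.image ι) (Red0 ∪ R.image ι) w ↔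
        ∃ v, ι v = w ∧ RightMove G {1} (∅ : Set ℕ) B R v := by
      intro w
      rw [rightMove_eq_leftMove,
        left_iff n hn S hS G G' ι Red0 Blue0 hR0 hB0
          (fun w h1 h2 h3 => (ha w h1 h3 h2).1) hbR hbB hc R B w]
      simp only [← rightMove_eq_leftMove]
    rw [distGame, distGame]
    refine ⟨Relabelling.mk (movesEquiv ι _ _ hLiff) (movesEquiv ι _ _ hRiff)
      (fun i => ?_) (fun j => ?_)⟩
    · have hiv : ι (movesEquiv ι _ _ hLiff i).1 = i.1 := movesEquiv_spec ι _ _ hLiff i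
      obtain ⟨hv1, hv2, -, -⟩ := (movesEquiv ι _ _ hLiff i).2
      show Relabelling
        (distGame G' (Set.Icc 1 n) S (insert i.1 (Blue0 ∪ B.image ι)) (Red0 ∪ R.image ι))
        (distGame G {1} (∅ : Set ℕ) (insert (movesEquiv ι _ _ hLiff i).1 B) R)
      have hins : insert i.1 (Blue0 ∪ B.image ι)
          = Blue0 ∪ ((insert (movesEquiv ι _ _ hLiff i).1 B).image ι) := by
        rw [← hiv, Finset.image_insert, Finset.union_insert]
      rw [hins]
      refine (ih _ ?_ _ R rfl).some
      rw [← hk, Finset.insert_union, Finset.compl_insert]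
      exact Finset.card_erase_lt_of_mem (Finset.mem_compl.2 (by simp [hv1, hv2]))
    · have hiv : ι (movesEquiv ι _ _ hRiff j).1 = j.1 := movesEquiv_spec ι _ _ hRiff j
      obtain ⟨hv1, hv2, -, -⟩ := (movesEquiv ι _ _ hRiff j).2
      show Relabelling
        (distGame G' (Set.Icc 1 n) S (Blue0 ∪ B.image ι) (insert j.1 (Red0 ∪ R.image ι)))
        (distGame G {1} (∅ : Set ℕ) B (insert (movesEquiv ι _ _ hRiff j).1 R))
      have hins : insert j.1 (Red0 ∪ R.image ι)
          = Red0 ∪ ((insert (movesEquiv ι _ _ hRiff j).1 R).image ι) := by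
        rw [← hiv, Finset.image_insert, Finset.union_insert]
      rw [hins]
      refine (ih _ ?_ B _ rfl).some
      rw [← hk, Finset.union_insert, Finset.compl_insert]
      exact Finset.card_erase_lt_of_mem (Finset.mem_compl.2 (by simp [hv1, hv2]))

open SetTheory.PGame in
private lemma leLF_mk_fst (xl xr : Type u) (xL : xl → PGame.{u}) (xR : xr → PGame.{u})
    (yl yr : Type u) (yL : yl → PGame.{u}) (yR : yr → PGame.{u}) :
    (leLF (mk xl xr xL xR) (mk yl yr yL yR)).1 =
      ((∀ i, (leLF (xL i) (mk yl yr yL yR)).2) ∧ ∀ j, (leLF (mk xl xr xL xR) (yR j)).2) := rfl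

open SetTheory.PGame in
private lemma leLF_mk_snd (xl xr : Type u) (xL : xl → PGame.{u}) (xR : xr → PGame.{u})
    (yl yr : Type u) (yL : yl → PGame.{u}) (yR : yr → PGame.{u}) :
    (leLF (mk xl xr xL xR) (mk yl yr yL yR)).2 =
      ((∃ i, (leLF (mk xl xr xL xR) (yL i)).1) ∨ ∃ j, (leLF (xR j) (mk yl yr yL yR)).1) := rfl

open SetTheory.PGame in
private theorem relab_zero {x y : PGame.{u}} (r : x ≡r y) :
    (((leLF x 0).1 ↔ (leLF y 0).1) ∧ ((leLF x 0).2 ↔ (leLF y 0).2)) ∧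
    (((leLF 0 x).1 ↔ (leLF 0 y).1) ∧ ((leLF 0 x).2 ↔ (leLF 0 y).2)) := by
  induction r with
  | mk L R hL hR ihL ihR =>
    rename_i x y
    cases x with
    | mk a b A B =>
    cases y with
    | mk c d C D =>
    have hz : (0 : PGame.{u}) = mk PEmpty PEmpty PEmpty.elim PEmpty.elim := rfl
    refine ⟨⟨?_, ?_⟩, ?_, ?_⟩ <;>
      simp only [hz, leLF_mk_fst, leLF_mk_snd, IsEmpty.forall_iff, IsEmpty.exists_iff,
        and_true, true_and, false_or, or_false]
    · constructor
      · intro h j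
        obtain ⟨i, rfl⟩ := L.surjective j
        exact (ihL i).1.2.mp (h i)
      · intro h i
        exact (ihL i).1.2.mpr (h (L i))
    · constructor
      · rintro ⟨i, hi⟩
        exact ⟨R i, (ihR i).1.1.mp hi⟩
      · rintro ⟨j, hj⟩
        obtain ⟨i, rfl⟩ := R.surjective j
        exact ⟨i, (ihR i).1.1.mpr hj⟩
    · constructor
      · intro h j
        obtain ⟨i, rfl⟩ := R.surjective j
        exact (ihR i).2.2.mp (h i)
      · intro h i
        exact (ihR i).2.2.mpr (h (R i))
    · constructor
      · rintro ⟨i, hi⟩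
        exact ⟨L i, (ihL i).2.1.mp hi⟩
      · rintro ⟨j, hj⟩
        obtain ⟨i, rfl⟩ := L.surjective j
        exact ⟨i, (ihL i).2.1.mpr hj⟩

open SetTheory.PGame in
/-- for `S ⊆ {1,…,n−1}`, under hypotheses (a)–(d), the distance game
`D⟨{1,…,n},S⟩` on `G'` starting from the position with blue pieces on `Blue0` and red pieces
on `Red0` is play-for-play equivalent to `Snort = D⟨{1},∅⟩` on `G` starting from the empty
position. -/
theorem stmt10 {V W : Type u} [Fintype V] [DecidableEq V] [Fintype W] [DecidableEq W]
    (n : ℕ) (hn : 1 ≤ n) (S : Set ℕ) (hS : ∀ s ∈ S, 1 ≤ s ∧ s < n)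
    (G : SimpleGraph V) (G' : SimpleGraph W) (ι : V ↪ W)
    (Blue0 Red0 : Finset W) (hBR : Disjoint Blue0 Red0)
    (hB0 : ∀ v : V, ι v ∉ Blue0) (hR0 : ∀ v : V, ι v ∉ Red0)
    -- (a) every extra vertex is within distance `n` of `Blue0` and of `Red0`:
    (ha : ∀ w : W, (∀ v : V, ι v ≠ w) → w ∉ Blue0 → w ∉ Red0 →
      (∃ b ∈ Blue0, G'.edist w b ≤ (n : ℕ∞)) ∧ (∃ r ∈ Red0, G'.edist w r ≤ (n : ℕ∞)))
    -- (b) every vertex of `V(G)` is at distance at least `n+1` from `Blue0 ∪ Red0`: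
    (hb : ∀ v : V, ∀ w ∈ Blue0 ∪ Red0, (n : ℕ∞) + 1 ≤ G'.edist (ι v) w)
    -- (c) distances between vertices of `V(G)`:
    (hc : ∀ u v : V, u ≠ v →
      (G.Adj u v → G'.edist (ι u) (ι v) = (n : ℕ∞)) ∧
      (¬G.Adj u v → (n : ℕ∞) + 1 ≤ G'.edist (ι u) (ι v)))
    -- (d) distinct vertices of `Blue0 ∪ Red0` are at distance at least `n+1`:
    (hd : ∀ w₁ ∈ Blue0 ∪ Red0, ∀ w₂ ∈ Blue0 ∪ Red0, w₁ ≠ w₂ →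
      (n : ℕ∞) + 1 ≤ G'.edist w₁ w₂) :
    -- the two games are play-for-play equivalent:
    Nonempty (distGame G' (Set.Icc 1 n) S Blue0 Red0 ≡r
      distGame G {1} (∅ : Set ℕ) (∅ : Finset V) (∅ : Finset V)) ∧
    -- in particular, the player moving first (respectively, second) has a winning strategy
    -- in one game iff in the other:
    ((0 ⧏ distGame G' (Set.Icc 1 n) S Blue0 Red0 ↔
        0 ⧏ distGame G {1} (∅ : Set ℕ) (∅ : Finset V) (∅ : Finset V)) ∧
      (0 ≤ distGame G' (Set.Icc 1 n) S Blue0 Red0 ↔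
        0 ≤ distGame G {1} (∅ : Set ℕ) (∅ : Finset V) (∅ : Finset V)) ∧
      (distGame G' (Set.Icc 1 n) S Blue0 Red0 ⧏ 0 ↔
        distGame G {1} (∅ : Set ℕ) (∅ : Finset V) (∅ : Finset V) ⧏ 0) ∧
      (distGame G' (Set.Icc 1 n) S Blue0 Red0 ≤ 0 ↔
        distGame G {1} (∅ : Set ℕ) (∅ : Finset V) (∅ : Finset V) ≤ 0)) := by
  have hkey := key n hn S hS G G' ι Blue0 Red0 hB0 hR0 ha hb hc _ ∅ ∅ rfl
  simp only [Finset.image_empty, Finset.union_empty] at hkey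
  obtain ⟨r⟩ := hkey
  have e := relab_zero r
  exact ⟨⟨r⟩, not_congr e.1.1, e.2.1, not_congr e.2.1, e.1.1⟩
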